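/- Let G be a Polish group and let (H_x)_{x∈ℝ} be a family of subgroups of G such that the set {(g,x) ∈ G×ℝ : g ∈ H_x} is analytic, the family is independent (for every finite F ⊆ ℝ and every x ∈ ℝ\F, H_x intersects the subgroup generated by (H_y)_{y∈F} trivially), and the family generates G. Then there are only countably many x ∈ ℝ with H_x nontrivial. -/

import Mathlib

open Topology Set MeasureTheory Filter Pointwise

section Hull

variable {X : Type*} [TopologicalSpace X]

lemma isMeagre_iUnion' {ι : Sort*} [Countable ι] {f : ι → Set X}
    (h : ∀ i, IsMeagre (f i)) : IsMeagre (⋃ i, f i) := by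
  rw [IsMeagre, compl_iUnion]
  exact (countable_iInter_mem).2 h

lemma IsMeagre.union' {s t : Set X} (hs : IsMeagre s) (ht : IsMeagre t) :
    IsMeagre (s ∪ t) := by
  rw [IsMeagre, compl_union]
  exact inter_mem hs ht

lemma isMeagre_biUnion' {ι : Type*} {s : Set ι} (hs : s.Countable) {f : ι → Set X}
    (h : ∀ i ∈ s, IsMeagre (f i)) : IsMeagre (⋃ i ∈ s, f i) := by
  rw [IsMeagre, compl_iUnion₂]
  exact (countable_bInter_mem hs).2 h

lemma IsClosed.baireMeasurableSet' {s : Set X} (hs : IsClosed s) : BaireMeasurableSet s :=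
  BaireMeasurableSet.of_compl hs.isOpen_compl.baireMeasurableSet

lemma isOpen_eq_empty_of_isMeagre [BaireSpace X] {U : Set X} (hU : IsOpen U)
    (h : IsMeagre U) : U = ∅ := by
  have : Dense Uᶜ := dense_of_mem_residual h
  have h2 : Uᶜ = univ := hU.isClosed_compl.closure_eq ▸ this.closure_eq
  simpa [compl_univ_iff] using congrArg compl h2

/-- The set of points near which `S` is non-meager. -/
def locNonMeager (S : Set X) : Set X :=
  {x | ∀ U : Set X, IsOpen U → x ∈ U → ¬ IsMeagre (S ∩ U)}

lemma isClosed_locNonMeager (S : Set X) : IsClosed (locNonMeager S) := by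
  rw [← isOpen_compl_iff, isOpen_iff_forall_mem_open]
  intro x hx
  simp only [locNonMeager, mem_compl_iff, mem_setOf_eq, not_forall] at hx
  obtain ⟨U, hUo, hxU, hUm⟩ := hx
  · refine ⟨U, fun y hy => ?_, hUo, hxU⟩
    simp only [locNonMeager, mem_compl_iff, mem_setOf_eq, not_forall]
    exact ⟨U, hUo, hy, by simpa using hUm⟩

lemma isMeagre_diff_locNonMeager [SecondCountableTopology X] (S : Set X) :
    IsMeagre (S \ locNonMeager S) := by
  obtain ⟨b, hbc, -, hb⟩ := TopologicalSpace.exists_countable_basis X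
  have : S \ locNonMeager S ⊆ ⋃ V ∈ {V ∈ b | IsMeagre (S ∩ V)}, (S ∩ V) := by
    intro x ⟨hxS, hx⟩
    simp only [locNonMeager, mem_setOf_eq, not_forall] at hx
    obtain ⟨U, hUo, hxU, hUm⟩ := hx
    have hUm' : IsMeagre (S ∩ U) := by simpa using hUm
    obtain ⟨V, hVb, hxV, hVU⟩ := hb.exists_subset_of_mem_open hxU hUo
    exact mem_iUnion₂.2 ⟨V, ⟨hVb, hUm'.mono (inter_subset_inter_right S hVU)⟩, hxS, hxV⟩
  exact (isMeagre_biUnion' (hbc.mono (sep_subset _ _)) (fun V hV => hV.2)).mono this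

/-- Baire hull of a set. -/
def baireHull (S : Set X) : Set X := locNonMeager S ∪ S

lemma subset_baireHull (S : Set X) : S ⊆ baireHull S := subset_union_right

lemma baireMeasurableSet_baireHull [SecondCountableTopology X] (S : Set X) :
    BaireMeasurableSet (baireHull S) := by
  have h : baireHull S = locNonMeager S ∪ (S \ locNonMeager S) := by
    ext x; simp only [baireHull, mem_union, mem_diff]; tauto
  rw [h]
  exact (isClosed_locNonMeager S).baireMeasurableSet'.union
    (isMeagre_diff_locNonMeager S).baireMeasurableSet

lemma exists_isOpen_of_not_isMeagre {W : Set X} (hW : BaireMeasurableSet W)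
    (h : ¬ IsMeagre W) : ∃ U : Set X, IsOpen U ∧ U.Nonempty ∧ IsMeagre (U \ W) := by
  obtain ⟨U, hUo, hWU⟩ := hW.residualEq_isOpen
  have hsymm : IsMeagre ((W \ U) ∪ (U \ W)) := by
    rw [IsMeagre, compl_union]
    refine mem_of_superset hWU ?_
    intro x hx
    simp only [mem_setOf_eq] at hx
    simp only [mem_inter_iff, mem_compl_iff, mem_diff]
    have hx' : x ∈ W ↔ x ∈ U := iff_of_eq hx
    constructor <;> intro hc <;> [exact hc.2 (hx'.1 hc.1); exact hc.2 (hx'.2 hc.1)]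
  refine ⟨U, hUo, ?_, hsymm.mono (subset_union_right.trans (by rfl))⟩
  · rcases eq_empty_or_nonempty U with rfl | hne
    · exact absurd (hsymm.mono (by intro x hx; simp [hx])) h
    · exact hne
  
lemma not_isMeagre_of_isOpen_nonempty [BaireSpace X] {U : Set X} (hU : IsOpen U)
    (hne : U.Nonempty) : ¬ IsMeagre U := fun h =>
  hne.ne_empty (isOpen_eq_empty_of_isMeagre hU h)

lemma baireHull_diff_isMeagre [SecondCountableTopology X] [BaireSpace X] {S Z : Set X}
    (hZ : BaireMeasurableSet Z) (hSZ : S ⊆ Z) : IsMeagre (baireHull S \ Z) := by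
  have h1 : IsMeagre (S \ locNonMeager S) := isMeagre_diff_locNonMeager S
  have h2 : IsMeagre (locNonMeager S \ Z) := by
    by_contra h2
    obtain ⟨U, hUo, hUne, hUm⟩ :=
      exists_isOpen_of_not_isMeagre ((isClosed_locNonMeager S).baireMeasurableSet'.diff hZ) h2
    have hxx : ∃ x, x ∈ U ∩ locNonMeager S := by
      by_contra hc
      push_neg at hc
      refine not_isMeagre_of_isOpen_nonempty hUo hUne (hUm.mono ?_)
      intro x hx
      exact ⟨hx, fun h => (hc x ⟨hx, h.1⟩)⟩
    obtain ⟨x, hxU, hxloc⟩ := hxx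
    refine hxloc U hUo hxU (hUm.mono ?_)
    rintro z ⟨hzS, hzU⟩
    exact ⟨hzU, fun h => h.2 (hSZ hzS)⟩
  refine (h2.union' h1).mono ?_
  rintro x ⟨hx, hxZ⟩
  rcases hx with hx | hx
  · exact Or.inl ⟨hx, hxZ⟩
  · by_cases hl : x ∈ locNonMeager S
    · exact Or.inl ⟨hl, hxZ⟩
    · exact Or.inr ⟨hx, hl⟩

end Hull

section Pettis

variable {G : Type*} [Group G] [TopologicalSpace G] [IsTopologicalGroup G] [BaireSpace G]

theorem Subgroup.isOpen_of_not_isMeagre (L : Subgroup G)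
    (hBM : BaireMeasurableSet (L : Set G)) (hnm : ¬ IsMeagre (L : Set G)) :
    IsOpen (L : Set G) := by
  obtain ⟨U, hUo, hUne, hUL⟩ := exists_isOpen_of_not_isMeagre hBM hnm
  obtain ⟨u, hu⟩ := hUne
  have hsub : U * U⁻¹ ⊆ (L : Set G) := by
    rintro g hg
    rw [Set.mem_mul] at hg
    obtain ⟨a, ha, b, hb, hab⟩ := hg
    rw [Set.mem_inv] at hb

    have hmeag : IsMeagre ((fun h : G => g⁻¹ * h) ⁻¹' (U \ (L : Set G))) := by
      have : (fun h : G => g⁻¹ * h) = ⇑(Homeomorph.mulLeft g⁻¹) := rfl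
      rw [this]
      exact hUL.preimage_of_isOpenMap (Homeomorph.mulLeft g⁻¹).continuous
        (Homeomorph.mulLeft g⁻¹).isOpenMap
    set V : Set G := U ∩ (fun h : G => g⁻¹ * h) ⁻¹' U with hV
    have hVo : IsOpen V := hUo.inter (hUo.preimage (continuous_const.mul continuous_id))
    have haV : a ∈ V := by
      refine ⟨ha, ?_⟩
      simp only [mem_preimage]
      have : g⁻¹ * a = b⁻¹ := by rw [← hab]; group
      rw [this]
      exact hb
    have hVnm : ¬ IsMeagre V := not_isMeagre_of_isOpen_nonempty hVo ⟨a, haV⟩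
    have : ¬ V ⊆ (U \ (L : Set G)) ∪ (fun h : G => g⁻¹ * h) ⁻¹' (U \ (L : Set G)) := by
      intro hsub'
      exact hVnm ((hUL.union' hmeag).mono hsub')
    obtain ⟨h, hhV, hh⟩ := not_subset.1 this
    rw [mem_union, not_or] at hh
    have hhL : h ∈ L := by
      by_contra hc
      exact hh.1 ⟨hhV.1, hc⟩
    have hgL : g⁻¹ * h ∈ L := by
      by_contra hc
      exact hh.2 ⟨hhV.2, hc⟩
    have : g = h * (g⁻¹ * h)⁻¹ := by group
    rw [this]
    exact L.mul_mem hhL (L.inv_mem hgL)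
  apply L.isOpen_of_mem_nhds (g := 1)
  refine Filter.mem_of_superset ?_ hsub
  have h1 : (1 : G) ∈ U * U⁻¹ := ⟨u, hu, u⁻¹, by simpa using hu, by simp⟩
  exact (hUo.mul_right).mem_nhds h1

end Pettis
section AnalyticBM

variable {X : Type*} [TopologicalSpace X] [T2Space X] [SecondCountableTopology X] [BaireSpace X]

/-- cylinder of a finite list -/
def listCyl (l : List ℕ) : Set (ℕ → ℕ) := {y | ∀ i < l.length, y i = l.getD i 0}

lemma listCyl_succ (l : List ℕ) : listCyl l = ⋃ k : ℕ, listCyl (l ++ [k]) := by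
  ext y
  simp only [mem_iUnion]
  constructor
  · intro hy
    refine ⟨y l.length, fun i hi => ?_⟩
    rw [List.length_append, List.length_singleton] at hi
    rcases lt_or_eq_of_le (Nat.lt_succ_iff.1 hi) with hlt | heq
    · rw [List.getD_append _ _ _ _ hlt]
      exact hy i hlt
    · subst heq
      rw [List.getD_append_right _ _ _ _ (le_refl _)]
      simp
  · rintro ⟨k, hk⟩ i hi
    have := hk i (by rw [List.length_append, List.length_singleton]; omega)
    rwa [List.getD_append _ _ _ _ hi] at this

theorem MeasureTheory.AnalyticSet.baireMeasurableSet {A : Set X}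
    (hA : MeasureTheory.AnalyticSet A) : BaireMeasurableSet A := by
  rw [MeasureTheory.AnalyticSet] at hA
  rcases hA with rfl | ⟨f, hf, rfl⟩
  · exact isOpen_empty.baireMeasurableSet
  classical
  set As : List ℕ → Set X := fun l => f '' listCyl l with hAs
  set B : List ℕ → Set X := fun l => baireHull (As l) ∩ closure (As l) with hB
  have hBM : ∀ l, BaireMeasurableSet (B l) := fun l =>
    (baireMeasurableSet_baireHull _).inter isClosed_closure.baireMeasurableSet'
  have hBA : ∀ l, As l ⊆ B l := fun l => subset_inter (subset_baireHull _) subset_closure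
  have hBP : ∀ l, B l ⊆ closure (As l) := fun l => inter_subset_right
  have hC : ∀ l, IsMeagre (B l \ ⋃ k : ℕ, B (l ++ [k])) := by
    intro l
    have hsub : As l ⊆ ⋃ k : ℕ, B (l ++ [k]) := by
      rw [hAs]
      simp only
      rw [listCyl_succ, image_iUnion]
      exact iUnion_mono fun k => hBA (l ++ [k])
    have hZ : BaireMeasurableSet (⋃ k : ℕ, B (l ++ [k])) :=
      BaireMeasurableSet.iUnion fun k => hBM _
    exact (baireHull_diff_isMeagre hZ hsub).mono
      (diff_subset_diff_left inter_subset_left)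
  set M : Set X := ⋃ l : List ℕ, (B l \ ⋃ k : ℕ, B (l ++ [k])) with hM
  have hMm : IsMeagre M := isMeagre_iUnion' hC
  have key : B [] \ M ⊆ range f := by
    rintro x ⟨hx0, hxM⟩
    have step : ∀ l : List ℕ, x ∈ B l → ∃ k : ℕ, x ∈ B (l ++ [k]) := by
      intro l hl
      have : x ∉ B l \ ⋃ k : ℕ, B (l ++ [k]) := fun h => hxM (mem_iUnion.2 ⟨l, h⟩)
      simp only [mem_diff, hl, true_and, not_not] at this
      exact mem_iUnion.1 this
    choose! K hK using step
    set L : ℕ → List ℕ := fun n => Nat.rec [] (fun _ ih => ih ++ [K ih]) n with hL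
    have hLsucc : ∀ n, L (n + 1) = L n ++ [K (L n)] := fun n => rfl
    have hl : ∀ n, x ∈ B (L n) := by
      intro n
      induction n with
      | zero => exact hx0
      | succ n ih => rw [hLsucc]; exact hK _ ih
    have hlen : ∀ n, (L n).length = n := by
      intro n
      induction n with
      | zero => rfl
      | succ n ih => rw [hLsucc]; simp [ih]
    set g : ℕ → ℕ := fun i => (L (i + 1)).getD i 0 with hg
    have hLg : ∀ n, ∀ i < n, (L n).getD i 0 = g i := by
      intro n
      induction n with
      | zero => intro i hi; omega
      | succ n ih =>
        intro i hi
        rcases lt_or_eq_of_le (Nat.lt_succ_iff.1 hi) with hlt | heq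
        · rw [hLsucc, List.getD_append _ _ _ _ (by rw [hlen]; exact hlt)]
          exact ih i hlt
        · subst heq; rfl
    have hcyl : ∀ n, listCyl (L n) = {y | ∀ i < n, y i = g i} := by
      intro n
      ext y
      simp only [listCyl, mem_setOf_eq, hlen]
      exact forall₂_congr fun i hi => by rw [hLg n i hi]
    suffices hxg : x = f g by rw [hxg]; exact mem_range_self g
    by_contra hne
    obtain ⟨W, V, hWo, hVo, hxW, hfgV, hVW⟩ := t2_separation hne
    have hnbhd : ∃ n : ℕ, listCyl (L n) ⊆ f ⁻¹' V := by
      have hop := hf.isOpen_preimage V hVo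
      rw [isOpen_pi_iff] at hop
      obtain ⟨I, u, hu, hIu⟩ := hop g hfgV
      refine ⟨I.sup id + 1, fun y hy => ?_⟩
      apply hIu
      intro i hi
      have hiI : i < I.sup id + 1 := Nat.lt_succ_of_le (Finset.le_sup (f := id) hi)
      have h2 := hy i (lt_of_lt_of_eq hiI (hlen _).symm)
      rw [hLg _ i hiI] at h2
      rw [h2]
      exact (hu i hi).2
    obtain ⟨n, hn⟩ := hnbhd
    have hx2 : x ∈ closure (As (L n)) := hBP _ (hl n)
    have hAV : As (L n) ⊆ V := image_subset_iff.2 hn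
    have hxcV : x ∈ closure V := closure_mono hAV hx2
    exact (hVW.closure_right hWo).le_bot ⟨hxW, hxcV⟩
  have hrB : range f ⊆ B [] := by
    have : range f = As [] := by
      rw [hAs]
      simp only
      have : listCyl [] = univ := by
        ext y; simp [listCyl]
      rw [this, image_univ]
    rw [this]
    exact hBA []
  have hdecomp : range f = (B [] \ M) ∪ (range f ∩ M) := by
    ext z
    constructor
    · intro hz
      by_cases hzM : z ∈ M
      · exact Or.inr ⟨hz, hzM⟩
      · exact Or.inl ⟨hrB hz, hzM⟩
    · rintro (hz | hz)
      · exact key hz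
      · exact hz.1
  rw [hdecomp]
  exact ((hBM []).diff hMm.baireMeasurableSet).union
    (hMm.mono inter_subset_right).baireMeasurableSet

end AnalyticBM
section AnaTools

namespace MeasureTheory

variable {α : Type*} [TopologicalSpace α]

lemma _root_.IsOpen.analyticSet' [PolishSpace α] {u : Set α} (hu : IsOpen u) : AnalyticSet u := by
  have := hu.analyticSet_image (continuous_id (X := α))
  rwa [image_id] at this

lemma AnalyticSet.inter' [T2Space α] {s t : Set α} (hs : AnalyticSet s)
    (ht : AnalyticSet t) : AnalyticSet (s ∩ t) := by
  have h : s ∩ t = ⋂ b : Bool, (if b then s else t) := by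
    ext x
    simp [Bool.forall_bool]
    tauto
  rw [h]
  exact AnalyticSet.iInter fun b => by cases b <;> simpa

lemma AnalyticSet.prod' {β : Type*} [TopologicalSpace β] {s : Set α} {t : Set β}
    (hs : AnalyticSet s) (ht : AnalyticSet t) : AnalyticSet (s ×ˢ t) := by
  rw [analyticSet_iff_exists_polishSpace_range] at hs ht ⊢
  obtain ⟨γ, tγ, pγ, f, hf, rfl⟩ := hs
  obtain ⟨δ, tδ, pδ, g, hg, rfl⟩ := ht
  exact ⟨γ × δ, inferInstance, inferInstance, Prod.map f g, hf.prodMap hg,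
    Set.range_prodMap⟩

end MeasureTheory
end AnaTools
theorem stmt_0 (G : Type*) [Group G] [TopologicalSpace G] [IsTopologicalGroup G]
    [PolishSpace G] (H : ℝ → Subgroup G)
    (hanalytic : MeasureTheory.AnalyticSet {p : G × ℝ | p.1 ∈ H p.2})
    (hindep : ∀ (F : Finset ℝ) (x : ℝ), x ∉ F → H x ⊓ (⨆ y ∈ F, H y) = ⊥)
    (hgen : (⨆ x : ℝ, H x) = ⊤) :
    {x : ℝ | H x ≠ ⊥}.Countable := by
  classical
  letI := TopologicalSpace.upgradeIsCompletelyMetrizable G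
  have hfin : ∀ g : G, ∃ F : Finset ℝ, g ∈ ⨆ y ∈ F, H y := by
    intro g
    have hg : g ∈ Subgroup.closure (⋃ x, (H x : Set G)) := by
      rw [← Subgroup.iSup_eq_closure, hgen]; trivial
    refine Subgroup.closure_induction
      (p := fun g _ => ∃ F : Finset ℝ, g ∈ ⨆ y ∈ F, H y) ?_ ?_ ?_ ?_ hg
    · intro a ha
      rw [Set.mem_iUnion] at ha
      obtain ⟨y, hy⟩ := ha
      exact ⟨{y}, le_biSup H (Finset.mem_singleton_self y) hy⟩
    · exact ⟨∅, Subgroup.one_mem _⟩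
    · rintro a b _ _ ⟨F1, h1⟩ ⟨F2, h2⟩
      exact ⟨F1 ∪ F2, Subgroup.mul_mem _
        (SetLike.le_def.1 (biSup_mono (fun i hi => Finset.mem_union_left _ hi)) h1)
        (SetLike.le_def.1 (biSup_mono (fun i hi => Finset.mem_union_right _ hi)) h2)⟩
    · rintro a _ ⟨F, h1⟩
      exact ⟨F, Subgroup.inv_mem _ h1⟩
  choose Fsup hFsup using hfin
  obtain ⟨D, hDc, hDd⟩ := TopologicalSpace.exists_countable_dense G
  set C : Set ℝ := ⋃ d ∈ D, (Fsup d : Set ℝ) with hC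
  have hCc : C.Countable := hDc.biUnion fun _ _ => (Fsup _).countable_toSet
  set E : ℝ → Set G := fun x => {g | ∃ y, y ≠ x ∧ g ∈ H y} with hE
  set Lx : ℝ → Subgroup G := fun x => Subgroup.closure (E x) with hLx
  have hHsub : ∀ x y, y ≠ x → H y ≤ Lx x := fun x y hyx g hg =>
    Subgroup.subset_closure ⟨y, hyx, hg⟩
  have hKsub : ∀ (x : ℝ) (F : Finset ℝ), x ∉ F → (⨆ y ∈ F, H y) ≤ Lx x := by
    intro x F hx
    exact iSup₂_le fun y hy => hHsub x y (fun h => hx (h ▸ hy))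
  have hmemL : ∀ (x : ℝ) (g : G), g ∈ Lx x →
      ∃ F : Finset ℝ, x ∉ F ∧ g ∈ ⨆ y ∈ F, H y := by
    intro x g hg
    refine Subgroup.closure_induction
      (p := fun g _ => ∃ F : Finset ℝ, x ∉ F ∧ g ∈ ⨆ y ∈ F, H y) ?_ ?_ ?_ ?_ hg
    · rintro a ⟨y, hyx, ha⟩
      refine ⟨{y}, ?_, le_biSup H (Finset.mem_singleton_self y) ha⟩
      simp only [Finset.mem_singleton]
      exact fun h => hyx h.symm
    · exact ⟨∅, by simp, Subgroup.one_mem _⟩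
    · rintro a b _ _ ⟨F1, hx1, h1⟩ ⟨F2, hx2, h2⟩
      refine ⟨F1 ∪ F2, ?_, Subgroup.mul_mem _
        (SetLike.le_def.1 (biSup_mono (fun i hi => Finset.mem_union_left _ hi)) h1)
        (SetLike.le_def.1 (biSup_mono (fun i hi => Finset.mem_union_right _ hi)) h2)⟩
      simp only [Finset.mem_union]
      tauto
    · rintro a _ ⟨F, hx1, h1⟩
      exact ⟨F, hx1, Subgroup.inv_mem _ h1⟩
  have hgnontriv : ∀ x : ℝ, H x ≠ ⊥ → ∃ g : G, g ∈ H x ∧ g ∉ Lx x := by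
    intro x hx
    rw [Ne, Subgroup.eq_bot_iff_forall] at hx
    push_neg at hx
    obtain ⟨g, hgH, hg1⟩ := hx
    refine ⟨g, hgH, fun hgL => hg1 ?_⟩
    obtain ⟨F, hxF, hgF⟩ := hmemL x g hgL
    have hmem : g ∈ H x ⊓ (⨆ y ∈ F, H y) := ⟨hgH, hgF⟩
    rw [hindep F x hxF] at hmem
    exact hmem
  have hEana : ∀ x : ℝ, MeasureTheory.AnalyticSet (E x) := by
    intro x
    have h1 : E x = Prod.fst '' ({p : G × ℝ | p.1 ∈ H p.2} ∩ {p : G × ℝ | p.2 ≠ x}) := by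
      ext g
      simp only [hE, Set.mem_setOf_eq, Set.mem_image, Set.mem_inter_iff]
      constructor
      · rintro ⟨y, hyx, hy⟩
        exact ⟨(g, y), ⟨hy, hyx⟩, rfl⟩
      · rintro ⟨⟨g', y⟩, ⟨hy, hyx⟩, rfl⟩
        exact ⟨y, hyx, hy⟩
    have hop : IsOpen {p : G × ℝ | p.2 ≠ x} :=
      (isClosed_singleton (x := x)).isOpen_compl.preimage continuous_snd
    rw [h1]
    exact (hanalytic.inter' hop.analyticSet').image_of_continuous continuous_fst
  have hLana : ∀ x : ℝ, MeasureTheory.AnalyticSet ((Lx x : Set G)) := by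
    intro x
    set Cn : ℕ → Set G := fun n =>
      Nat.rec ({1} : Set G) (fun _ ih => (fun p : G × G => p.1 * p.2) '' (ih ×ˢ E x)) n
      with hCnd
    have hCn0 : Cn 0 = ({1} : Set G) := rfl
    have hCnsucc : ∀ n, Cn (n + 1) = (fun p : G × G => p.1 * p.2) '' (Cn n ×ˢ E x) :=
      fun n => rfl
    have hana : ∀ n, MeasureTheory.AnalyticSet (Cn n) := by
      intro n
      induction n with
      | zero => exact (isClosed_singleton).analyticSet
      | succ n ih =>
        rw [hCnsucc]
        exact (ih.prod' (hEana x)).image_of_continuous continuous_mul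
    have hEinv : ∀ g ∈ E x, g⁻¹ ∈ E x := by
      rintro g ⟨y, hy, hgy⟩
      exact ⟨y, hy, Subgroup.inv_mem _ hgy⟩
    have hmul : ∀ m n (a b : G), a ∈ Cn m → b ∈ Cn n → a * b ∈ Cn (m + n) := by
      intro m n
      induction n with
      | zero =>
        intro a b ha hb
        rw [hCn0, Set.mem_singleton_iff] at hb
        subst hb
        simpa using ha
      | succ n ih =>
        rintro a b ha hb
        rw [hCnsucc] at hb
        obtain ⟨⟨c, e⟩, ⟨hc, he⟩, rfl⟩ := hb
        have hac := ih a c ha hc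
        rw [show m + (n + 1) = (m + n) + 1 from rfl, hCnsucc]
        exact ⟨(a * c, e), ⟨hac, he⟩, by simp [mul_assoc]⟩
    have hEC1 : ∀ g ∈ E x, g ∈ Cn 1 := by
      intro g hg
      show g ∈ Cn (0 + 1)
      rw [hCnsucc 0]
      exact ⟨(1, g), ⟨rfl, hg⟩, one_mul g⟩
    have hinv : ∀ n (a : G), a ∈ Cn n → a⁻¹ ∈ Cn n := by
      intro n
      induction n with
      | zero =>
        intro a ha
        rw [hCn0, Set.mem_singleton_iff] at ha
        simp [ha, hCn0]
      | succ n ih =>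
        rintro a ha
        rw [hCnsucc] at ha
        obtain ⟨⟨c, e⟩, ⟨hc, he⟩, rfl⟩ := ha
        rw [mul_inv_rev]
        have := hmul 1 n (e⁻¹) (c⁻¹) (hEC1 _ (hEinv _ he)) (ih c hc)
        rwa [Nat.add_comm 1 n] at this
    have hset : ((Lx x : Subgroup G) : Set G) = ⋃ n, Cn n := by
      apply Set.Subset.antisymm
      · intro g hg
        rw [SetLike.mem_coe] at hg
        refine Subgroup.closure_induction (p := fun g _ => g ∈ ⋃ n, Cn n) ?_ ?_ ?_ ?_ hg
        · intro a ha
          exact Set.mem_iUnion.2 ⟨1, hEC1 a ha⟩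
        · exact Set.mem_iUnion.2 ⟨0, by rw [hCn0]; exact rfl⟩
        · rintro a b _ _ ha hb
          rw [Set.mem_iUnion] at ha hb ⊢
          obtain ⟨m, ha⟩ := ha
          obtain ⟨n, hb⟩ := hb
          exact ⟨m + n, hmul m n a b ha hb⟩
        · intro a _ ha
          rw [Set.mem_iUnion] at ha ⊢
          obtain ⟨n, ha⟩ := ha
          exact ⟨n, hinv n a ha⟩
      · refine Set.iUnion_subset fun n => ?_
        induction n with
        | zero =>
          intro a ha
          rw [hCn0, Set.mem_singleton_iff] at ha
          subst ha
          exact (Lx x).one_mem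
        | succ n ih =>
          rw [hCnsucc]
          rintro a ⟨⟨c, e⟩, ⟨hc, he⟩, rfl⟩
          exact (Lx x).mul_mem (ih hc) (Subgroup.subset_closure he)
    rw [hset]
    exact MeasureTheory.AnalyticSet.iUnion hana
  have hmeager : ∀ x : ℝ, H x ≠ ⊥ → x ∉ C → IsMeagre ((Lx x : Set G)) := by
    intro x hx hxC
    by_contra hnm
    have hBM : BaireMeasurableSet ((Lx x : Set G)) := (hLana x).baireMeasurableSet
    have hopen := (Lx x).isOpen_of_not_isMeagre hBM hnm
    have hclosed := (Lx x).isClosed_of_isOpen hopen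
    have hdense : Dense ((Lx x : Set G)) := by
      refine hDd.mono ?_
      intro d hd
      have hxF : x ∉ Fsup d := fun hmem => hxC (Set.mem_biUnion hd hmem)
      exact hKsub x (Fsup d) hxF (hFsup d)
    have huniv : ((Lx x : Subgroup G) : Set G) = Set.univ := by
      rw [← hclosed.closure_eq]
      exact hdense.closure_eq
    obtain ⟨g, hgH, hgL⟩ := hgnontriv x hx
    have hgmem : g ∈ (Lx x : Set G) := by rw [huniv]; trivial
    exact hgL hgmem
  set T := {x : ℝ | H x ≠ ⊥ ∧ x ∉ C} with hT
  have hTfin : T.Finite := by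
    by_contra hTinf
    have hTi : Set.Infinite T := hTinf
    set e := hTi.natEmbedding with he
    have hmea : IsMeagre (⋃ n : ℕ, ((Lx ((e n : ℝ)) : Subgroup G) : Set G)) :=
      isMeagre_iUnion' fun n => hmeager _ (e n).2.1 (e n).2.2
    have hcompl : ((⋃ n : ℕ, ((Lx ((e n : ℝ)) : Subgroup G) : Set G))ᶜ).Nonempty :=
      (dense_of_mem_residual hmea).nonempty
    obtain ⟨g, hg⟩ := hcompl
    have hex : ∃ n : ℕ, ((e n : ℝ)) ∉ Fsup g := by
      by_contra hall
      push_neg at hall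
      have hinj : Function.Injective (fun n => ((e n : ℝ))) := fun a b hab =>
        e.injective (Subtype.coe_injective hab)
      refine (Set.infinite_range_of_injective hinj) (((Fsup g).finite_toSet).subset ?_)
      rintro _ ⟨n, rfl⟩
      exact hall n
    obtain ⟨n, hn⟩ := hex
    exact hg (Set.mem_iUnion.2 ⟨n, hKsub _ _ hn (hFsup g)⟩)
  have hsub : {x : ℝ | H x ≠ ⊥} ⊆ C ∪ T := by
    intro x hx
    by_cases hxC : x ∈ C
    · exact Or.inl hxC
    · exact Or.inr ⟨hx, hxC⟩
  exact Set.Countable.mono hsub (hCc.union hTfin.countable)
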